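/- If the dependency digraph of a tabletop rearrangement instance contains a directed cycle, then every plan for the instance consists of at least 1 + |{i : sᵢ ≠ gᵢ}| pick-and-place actions. In particular, if sᵢ ≠ gᵢ for all i, every plan has at least n + 1 actions. -/

import Mathlib

open Metric in
/-- A configuration of `n` unit-disc objects in the plane (modeled by `ℂ`) is feasible
if the closed unit discs centered at the object positions are pairwise disjoint. -/
def FeasibleConfig {n : ℕ} (c : Fin n → ℂ) : Prop :=
  ∀ i j : Fin n, i ≠ j → Disjoint (closedBall (c i) 1) (closedBall (c j) 1)

/-- A pick-and-place action changes the position of exactly one object. -/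
def PickPlace {n : ℕ} (c c' : Fin n → ℂ) : Prop :=
  ∃ i : Fin n, c' i ≠ c i ∧ ∀ j : Fin n, j ≠ i → c' j = c j

/-- `plan`, the list of configurations resulting from the successive pick-and-place
actions, is a plan transforming the start configuration `s` into the goal
configuration `g`: each action changes the position of exactly one object, each
resulting configuration is feasible, and the final configuration is the goal.  The
number of actions of the plan is `plan.length`. -/
def IsPlan {n : ℕ} (s g : Fin n → ℂ) (plan : List (Fin n → ℂ)) : Prop :=
  List.Chain PickPlace s plan ∧ (∀ c ∈ plan, FeasibleConfig c) ∧
    (s :: plan).getLast (by simp) = g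

open Metric in
/-- The dependency digraph of the instance: an arc from `i` to `j` (for `i ≠ j`) exactly
when the closed unit disc centered at `g i` intersects the closed unit disc centered at
`s j`. -/
def DepArc {n : ℕ} (s g : Fin n → ℂ) (i j : Fin n) : Prop :=
  i ≠ j ∧ (Metric.closedBall (g i) 1 ∩ Metric.closedBall (s j) 1).Nonempty

private lemma chain_getD {α : Type*} {R : α → α → Prop} {l : List α} {a : α} (d : α)
    (h : List.Chain R a l) :
    ∀ k, k < l.length → R ((a :: l).getD k d) ((a :: l).getD (k+1) d) := by
  induction l generalizing a with
  | nil => intro k hk; simp at hk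
  | cons b t ih =>
    intro k hk
    cases h with
    | cons_cons hab ht =>
      cases k with
      | zero => simpa using hab
      | succ k => simpa using ih ht k (by simpa using hk)

open Metric in
/-- If the dependency digraph of a tabletop rearrangement instance contains a directed
cycle, then every plan consists of at least `1 + |{i : sᵢ ≠ gᵢ}|` pick-and-place
actions; in particular, if `sᵢ ≠ gᵢ` for all `i`, every plan has at least `n + 1`
actions. -/
theorem stmt_12 {n : ℕ} (s g : Fin n → ℂ)
    (hs : ∀ i j : Fin n, i ≠ j → Disjoint (closedBall (s i) 1) (closedBall (s j) 1))
    (hg : ∀ i j : Fin n, i ≠ j → Disjoint (closedBall (g i) 1) (closedBall (g j) 1))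
    (hcyc : ∃ x : Fin n, Relation.TransGen (DepArc s g) x x) :
    (∀ plan : List (Fin n → ℂ), IsPlan s g plan →
        1 + {i : Fin n | s i ≠ g i}.ncard ≤ plan.length) ∧
    ((∀ i, s i ≠ g i) → ∀ plan : List (Fin n → ℂ), IsPlan s g plan →
        n + 1 ≤ plan.length) := by
  classical
  obtain ⟨x, hx⟩ := hcyc
  have main : ∀ plan : List (Fin n → ℂ), IsPlan s g plan →
      1 + {i : Fin n | s i ≠ g i}.ncard ≤ plan.length := by
    intro plan hplan
    by_contra hlt
    push_neg at hlt
    obtain ⟨hchain, hfeas, hlast⟩ := hplan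
    set N := plan.length with hN
    set F : Finset (Fin n) := Finset.univ.filter (fun i => s i ≠ g i) with hF
    have hncard : {i : Fin n | s i ≠ g i}.ncard = F.card := by
      rw [show {i : Fin n | s i ≠ g i} = (F : Set (Fin n)) by ext i; simp [hF]]
      exact Set.ncard_coe_finset F
    have hNF : N ≤ F.card := by rw [hncard] at hlt; omega
    set L := s :: plan with hL
    set c : ℕ → (Fin n → ℂ) := fun t => L.getD t g with hc
    have hc0 : c 0 = s := rfl
    have hcN : ∀ t, N ≤ t → c t = g := by
      intro t ht
      rcases eq_or_lt_of_le ht with h | h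
      · have hlen : t < L.length := by simp [hL, ← h, hN]
        have : c t = L.getLast (by simp [hL]) := by
          rw [List.getLast_eq_getElem]
          simp only [hc, List.getD_eq_getElem L g hlen]
          congr 1
          simp [hL, hN, ← h]
        rw [this, hlast]
      · simp only [hc]
        apply List.getD_eq_default
        simp [hL]; omega
    have hstep : ∀ k, k < N → PickPlace (c k) (c (k+1)) :=
      fun k hk => chain_getD g hchain k hk
    set m : ℕ → Fin n := fun k => if h : k < N then (hstep k h).choose else x with hm
    have hm1 : ∀ k, (h : k < N) → c (k+1) (m k) ≠ c k (m k) := by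
      intro k h
      simp only [hm, dif_pos h]
      exact (hstep k h).choose_spec.1
    have hm2 : ∀ k, (h : k < N) → ∀ j, j ≠ m k → c (k+1) j = c k j := by
      intro k h
      simp only [hm, dif_pos h]
      exact (hstep k h).choose_spec.2
    -- objects that are not moved in a time interval stay put
    have hstay : ∀ (i : Fin n) (a b : ℕ), a ≤ b →
        (∀ k, a ≤ k → k < b → m k ≠ i) → c b i = c a i := by
      intro i a b hab hno
      induction b, hab using Nat.le_induction with
      | base => rfl
      | succ b hb ih =>
        have hcb : c b i = c a i := ih (fun k hk hk' => hno k hk (by omega))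
        rcases lt_or_ge b N with hbN | hbN
        · rw [hm2 b hbN i (Ne.symm (hno b hb (by omega))), hcb]
        · rw [hcN (b+1) (by omega), ← hcN b hbN, hcb]
    have hmove : ∀ i : Fin n, s i ≠ g i → ∃ k, k < N ∧ m k = i := by
      intro i hi
      by_contra hcon
      push_neg at hcon
      have := hstay i 0 N (Nat.zero_le _) (fun k _ hk => hcon k hk)
      rw [hc0, hcN N le_rfl] at this
      exact hi this.symm
    -- the list of moved indices
    set M : List (Fin n) := (List.range N).map m with hM
    have hFsub : F ⊆ M.toFinset := by
      intro i hi
      obtain ⟨k, hk, hmk⟩ := hmove i (by simpa [hF] using hi)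
      simp only [hM, List.mem_toFinset, List.mem_map]
      exact ⟨k, List.mem_range.2 hk, hmk⟩
    have hMlen : M.length = N := by simp [hM]
    have hcards : F.card ≤ M.toFinset.card := Finset.card_le_card hFsub
    have hcard2 : M.toFinset.card ≤ N := hMlen ▸ List.toFinset_card_le M
    have hnodup : M.Nodup := by
      have h1 : M.toFinset.card = M.length := by omega
      rw [List.card_toFinset] at h1
      rw [← List.dedup_eq_self]
      exact (List.dedup_sublist M).eq_of_length h1
    have hinj : ∀ k1 k2, k1 < N → k2 < N → m k1 = m k2 → k1 = k2 := by
      have := (List.nodup_map_iff_inj_on (List.nodup_range : (List.range N).Nodup)).1 (hM ▸ hnodup)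
      intro k1 k2 h1 h2 heq
      exact this k1 (List.mem_range.2 h1) k2 (List.mem_range.2 h2) heq
    -- position lemmas
    have hposS : ∀ (i : Fin n) (k), k < N → m k = i → ∀ t, t ≤ k → c t i = s i := by
      intro i k hk hmk t ht
      rw [← hc0]
      apply hstay i 0 t (Nat.zero_le _)
      intro k' _ hk' heq
      have := hinj k' k (by omega) hk (heq.trans hmk.symm ▸ rfl)
      omega
    have hposG : ∀ (i : Fin n) (k), k < N → m k = i → ∀ t, k < t → t ≤ N → c t i = g i := by
      intro i k hk hmk t ht htN
      rw [← hcN N le_rfl]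
      apply (hstay i t N htN ?_).symm
      intro k' hk' hk'2 heq
      have := hinj k' k hk'2 hk (heq.trans hmk.symm ▸ rfl)
      omega
    -- arcs force strict ordering of move times
    have key : ∀ i j, DepArc s g i j →
        ∃ ki kj, ki < N ∧ kj < N ∧ m ki = i ∧ m kj = j ∧ kj < ki := by
      rintro i j ⟨hij, p, hp1, hp2⟩
      have hiF : s i ≠ g i := by
        intro h
        exact Set.disjoint_left.1 (hs i j hij) (h ▸ hp1) hp2
      have hjF : s j ≠ g j := by
        intro h
        exact Set.disjoint_left.1 (hg i j hij) hp1 (h ▸ hp2)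
      obtain ⟨ki, hkiN, hki⟩ := hmove i hiF
      obtain ⟨kj, hkjN, hkj⟩ := hmove j hjF
      refine ⟨ki, kj, hkiN, hkjN, hki, hkj, ?_⟩
      by_contra hord
      push_neg at hord
      have hne : ki ≠ kj := fun h => hij (hki ▸ h ▸ hkj)
      have hkikj : ki < kj := by omega
      have hfi : c (ki+1) i = g i := hposG i ki hkiN hki (ki+1) (by omega) (by omega)
      have hfj : c (ki+1) j = s j := hposS j kj hkjN hkj (ki+1) (by omega)
      have hmem : c (ki+1) ∈ plan := by
        have : c (ki+1) = plan.getD ki g := by simp [hc, hL]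
        rw [this, List.getD_eq_getElem plan g (by omega)]
        exact List.getElem_mem _
      have := hfeas _ hmem i j hij
      rw [hfi, hfj] at this
      exact Set.disjoint_left.1 this hp1 hp2
    -- transitive closure
    have htg : ∀ a b : Fin n, Relation.TransGen (DepArc s g) a b →
        ∃ ka kb, ka < N ∧ kb < N ∧ m ka = a ∧ m kb = b ∧ kb < ka := by
      intro a b h
      induction h with
      | single h => exact key _ _ h
      | tail _ hbc ih =>
        obtain ⟨ka, kb, h1, h2, h3, h4, h5⟩ := ih
        obtain ⟨kb', kc, h1', h2', h3', h4', h5'⟩ := key _ _ hbc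
        have : kb' = kb := hinj _ _ h1' h2 (h3'.trans h4.symm)
        exact ⟨ka, kc, h1, h2', h3, h4', by omega⟩
    obtain ⟨ka, kb, h1, h2, h3, h4, h5⟩ := htg x x hx
    have : ka = kb := hinj _ _ h1 h2 (h3.trans h4.symm)
    omega
  refine ⟨main, fun h plan hplan => ?_⟩
  have := main plan hplan
  have huniv : {i : Fin n | s i ≠ g i} = Set.univ := by
    ext i; simp [h i]
  rw [huniv, Set.ncard_univ, Nat.card_eq_fintype_card, Fintype.card_fin] at this
  omega
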